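/- arXiv:2303.07737 — 6 statements merged into one kernel-verified Lean document; each statement's English description precedes it below -/
import Mathlib

section
/- A sharp POVM {P_x}_{x∈X} on a finite-dimensional Hilbert space H with |X| = dim H is rank-one projective: each P_x is a rank-one orthogonal projection and P_x P_{x'} = δ_{x,x'} P_x. -/
open Matrix Finset
open scoped ComplexOrder

def IsPOVM {X : Type*} [Fintype X] {n : ℕ} (P : X → Matrix (Fin n) (Fin n) ℂ) : Prop :=
  (∀ x, (P x).PosSemidef) ∧ ∑ x, P x = 1

def IsSharp {X : Type*} [Fintype X] {n : ℕ} (P : X → Matrix (Fin n) (Fin n) ℂ) : Prop :=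
  ∀ x, ∃ ψ : Fin n → ℂ, star ψ ⬝ᵥ ψ = 1 ∧ (P x).mulVec ψ = ψ

section Aux

variable {X : Type*} [Fintype X] {n : ℕ}

lemma aux_sum_mulVec (P : X → Matrix (Fin n) (Fin n) ℂ) (v : Fin n → ℂ) :
    (∑ x, P x) *ᵥ v = ∑ x, P x *ᵥ v :=
  map_sum (Matrix.mulVec.addMonoidHomLeft v) P univ

lemma aux_dotProduct_sum (u : Fin n → ℂ) (f : X → Fin n → ℂ) :
    u ⬝ᵥ ∑ x, f x = ∑ x, u ⬝ᵥ f x := by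
  simp only [dotProduct, Finset.sum_apply, Finset.mul_sum]
  exact Finset.sum_comm

lemma aux_vecMulVec_mulVec (a b v : Fin n → ℂ) :
    vecMulVec a b *ᵥ v = (b ⬝ᵥ v) • a := by
  funext i
  simp [mulVec, dotProduct, vecMulVec_apply, Finset.mul_sum, mul_comm, mul_left_comm]

lemma aux_vecMulVec_mul (a b c d : Fin n → ℂ) :
    vecMulVec a b * vecMulVec c d = (b ⬝ᵥ c) • vecMulVec a d := by
  ext i j
  simp only [mul_apply, vecMulVec_apply, Matrix.smul_apply, dotProduct, smul_eq_mul, Finset.sum_mul,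
    Finset.mul_sum]
  apply Finset.sum_congr rfl
  intros; ring

end Aux

/-- A sharp POVM whose outcome set has cardinality equal to the dimension is
rank-one projective. -/
theorem sharp_povm_card_eq_dim_rank_one_projective {X : Type*} [Fintype X] [DecidableEq X]
    {n : ℕ} (P : X → Matrix (Fin n) (Fin n) ℂ) (hP : IsPOVM P) (hsharp : IsSharp P)
    (hcard : Fintype.card X = n) :
    (∀ x, (P x).IsHermitian ∧ P x * P x = P x ∧ (P x).rank = 1) ∧
    (∀ x x', P x * P x' = if x = x' then P x else 0) := by
  obtain ⟨hpos, hsum⟩ := hP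
  choose ψ hnorm heig using hsharp
  -- Step 1: P y kills ψ x for y ≠ x
  have key : ∀ x y, y ≠ x → P y *ᵥ ψ x = 0 := by
    intro x y hyx
    have hsum1 : ∑ z, star (ψ x) ⬝ᵥ (P z *ᵥ ψ x) = 1 := by
      rw [← aux_dotProduct_sum, ← aux_sum_mulVec, hsum, one_mulVec, hnorm]
    have hx1 : star (ψ x) ⬝ᵥ (P x *ᵥ ψ x) = 1 := by rw [heig, hnorm]
    have herase : ∑ z ∈ univ.erase x, star (ψ x) ⬝ᵥ (P z *ᵥ ψ x) = 0 := by
      have h2 : star (ψ x) ⬝ᵥ (P x *ᵥ ψ x) + ∑ z ∈ univ.erase x, star (ψ x) ⬝ᵥ (P z *ᵥ ψ x)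
          = ∑ z, star (ψ x) ⬝ᵥ (P z *ᵥ ψ x) :=
        Finset.add_sum_erase univ (fun z => star (ψ x) ⬝ᵥ (P z *ᵥ ψ x)) (mem_univ x)
      rw [hsum1, hx1] at h2
      linear_combination h2
    have hzero : star (ψ x) ⬝ᵥ (P y *ᵥ ψ x) = 0 := by
      have hnn : ∀ z ∈ univ.erase x, (0:ℂ) ≤ star (ψ x) ⬝ᵥ (P z *ᵥ ψ x) :=
        fun z _ => (hpos z).dotProduct_mulVec_nonneg (ψ x)
      exact (Finset.sum_eq_zero_iff_of_nonneg hnn).mp herase y (mem_erase.mpr ⟨hyx, mem_univ y⟩)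
    exact ((hpos y).dotProduct_mulVec_zero_iff (ψ x)).mp hzero
  -- mulVec of P x on ψ y
  have hact : ∀ x y, P x *ᵥ ψ y = if x = y then ψ x else 0 := by
    intro x y
    by_cases h : x = y
    · subst h; simp [heig]
    · simp [h, key y x h]
  -- Step 2: orthonormality
  have horth : ∀ x y, star (ψ x) ⬝ᵥ ψ y = if x = y then 1 else 0 := by
    intro x y
    by_cases h : x = y
    · subst h; simp [hnorm]
    · have hv : star (ψ x) ᵥ* P y = 0 := by
        have h0 := congrArg star (key x y (Ne.symm h))
        rw [star_mulVec, (hpos y).1.eq] at h0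
        simpa using h0
      have : star (ψ x) ⬝ᵥ ψ y = star (ψ x) ⬝ᵥ (P y *ᵥ ψ y) := by rw [heig]
      rw [this, dotProduct_mulVec, hv, zero_dotProduct]
      simp [h]
  -- Step 3: linear independence and basis
  have hli : LinearIndependent ℂ ψ := by
    rw [Fintype.linearIndependent_iff]
    intro c hc y
    have : star (ψ y) ⬝ᵥ (∑ x, c x • ψ x) = c y := by
      rw [aux_dotProduct_sum]
      have : ∀ x, star (ψ y) ⬝ᵥ (c x • ψ x) = if y = x then c x else 0 := by
        intro x
        rw [dotProduct_smul, horth, smul_eq_mul]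
        by_cases h : y = x <;> simp [h]
      simp [this]
    rw [hc] at this
    simpa using this.symm
  have hne : Nonempty X ∨ n = 0 := by
    rcases Nat.eq_zero_or_pos n with h | h
    · exact Or.inr h
    · exact Or.inl (Fintype.card_pos_iff.mp (hcard ▸ h))
  -- P x equals the outer product of ψ x
  have hPx : ∀ x, P x = vecMulVec (ψ x) (star (ψ x)) := by
    rcases Nat.eq_zero_or_pos n with hn | hn
    · intro x; subst hn; ext i j; exact absurd i.2 (by omega)
    haveI : Nonempty X := Fintype.card_pos_iff.mp (hcard ▸ hn)
    have hfr : Fintype.card X = Module.finrank ℂ (Fin n → ℂ) := by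
      simpa using hcard
    let B : Module.Basis X ℂ (Fin n → ℂ) := basisOfLinearIndependentOfCardEqFinrank hli hfr
    have hB : ∀ y, B y = ψ y := fun y =>
      congrFun (coe_basisOfLinearIndependentOfCardEqFinrank hli hfr) y
    intro x
    apply Matrix.toLin'.injective
    apply Module.Basis.ext B
    intro y
    rw [hB]
    simp only [Matrix.toLin'_apply]
    rw [hact, aux_vecMulVec_mulVec, horth]
    by_cases h : x = y <;> simp [h]
  have hprod : ∀ x x', P x * P x' = if x = x' then P x else 0 := by
    intro x x'
    rw [hPx x, hPx x', aux_vecMulVec_mul]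
    have : star (ψ x) ⬝ᵥ ψ x' = if x = x' then 1 else 0 := horth x x'
    rw [this]
    by_cases h : x = x' <;> simp [h, hPx x]
  refine ⟨fun x => ⟨?_, ?_, ?_⟩, hprod⟩
  · exact (hpos x).1
  · simpa using hprod x x
  -- rank
  · have hle : (P x).rank ≤ 1 := by
      rw [hPx x, Matrix.vecMulVec_eq (Fin 1)]
      exact le_trans (Matrix.rank_mul_le_left _ _) (by
        have h := Matrix.rank_le_card_width (Matrix.replicateCol (Fin 1) (ψ x)); simp at h; exact h)
    have hne0 : (P x).rank ≠ 0 := by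
      intro h0
      have : LinearMap.range (P x).mulVecLin = ⊥ := by
        rw [Matrix.rank] at h0
        exact Submodule.finrank_eq_zero.mp h0
      have hψ0 : P x *ᵥ ψ x = 0 := by
        have : (P x).mulVecLin (ψ x) ∈ (⊥ : Submodule ℂ (Fin n → ℂ)) :=
          this ▸ LinearMap.mem_range_self _ _
        simpa [Matrix.mulVecLin_apply] using this
      rw [heig] at hψ0
      have := hnorm x
      rw [hψ0] at this
      simp at this
    omega
end

section
/- Let {P_x}_{x∈X} be a sharp POVM on H_A with unit eigenvectors ψ_x, and {Q_x}_{x∈X} any POVM on H_B. With V : H_B → H_A ⊗ H_B given by V φ = ∑_x ψ_x ⊗ √(Q_x) φ, one has V† (P_x ⊗ 1_B) V = Q_x for every x ∈ X. Hence every sharp POVM is preprocessing cleaner than any POVM with the same outcome set. -/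
open Matrix Finset
open scoped ComplexOrder Kronecker

def IsCPMap {a b : ℕ} (Φ : Matrix (Fin a) (Fin a) ℂ →ₗ[ℂ] Matrix (Fin b) (Fin b) ℂ) : Prop :=
  ∃ (k : ℕ) (K : Fin k → Matrix (Fin b) (Fin a) ℂ), ∀ M, Φ M = ∑ i, K i * M * (K i)ᴴ

/-- With V φ = ∑_x ψ_x ⊗ √(Q_x) φ one has V† (P_x ⊗ 1) V = Q_x; hence every
sharp POVM is preprocessing cleaner than any POVM with the same outcome set. -/
theorem sharp_povm_preprocessing_cleaner {X : Type*} [Fintype X] {a b : ℕ}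
    (P : X → Matrix (Fin a) (Fin a) ℂ) (hP : IsPOVM P)
    (Q : X → Matrix (Fin b) (Fin b) ℂ) (hQ : IsPOVM Q)
    (ψ : X → Fin a → ℂ)
    (hunit : ∀ x, star (ψ x) ⬝ᵥ ψ x = 1)
    (heig : ∀ x, (P x).mulVec (ψ x) = ψ x)
    (V : Matrix (Fin a × Fin b) (Fin b) ℂ)
    (hV : ∀ p k, V p k = ∑ x, ψ x p.1 * (((hQ.1 x).1.eigenvectorUnitary : Matrix (Fin b) (Fin b) ℂ) *
      diagonal (((↑) : ℝ → ℂ) ∘ Real.sqrt ∘ (hQ.1 x).1.eigenvalues) *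
      star ((hQ.1 x).1.eigenvectorUnitary : Matrix (Fin b) (Fin b) ℂ)) p.2 k) :
    (∀ x, Vᴴ * (P x ⊗ₖ (1 : Matrix (Fin b) (Fin b) ℂ)) * V = Q x) ∧
    ∃ E : Matrix (Fin a) (Fin a) ℂ →ₗ[ℂ] Matrix (Fin b) (Fin b) ℂ,
      IsCPMap E ∧ E 1 = 1 ∧ ∀ x, E (P x) = Q x := by
  classical
  set S : X → Matrix (Fin b) (Fin b) ℂ := fun x => ((hQ.1 x).1.eigenvectorUnitary : Matrix (Fin b) (Fin b) ℂ) *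
      diagonal (((↑) : ℝ → ℂ) ∘ Real.sqrt ∘ (hQ.1 x).1.eigenvalues) *
      star ((hQ.1 x).1.eigenvectorUnitary : Matrix (Fin b) (Fin b) ℂ) with hSdef
  have hSherm : ∀ x, (S x)ᴴ = S x := fun x => by
    simp only [hSdef, conjTranspose_mul, diagonal_conjTranspose, star_eq_conjTranspose,
      conjTranspose_conjTranspose, mul_assoc]
    congr 3
    ext i
    simp
  have hSS : ∀ x, S x * S x = Q x := fun x => by
    have hU : star ((hQ.1 x).1.eigenvectorUnitary : Matrix (Fin b) (Fin b) ℂ) *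
        ((hQ.1 x).1.eigenvectorUnitary : Matrix (Fin b) (Fin b) ℂ) = 1 :=
      Unitary.coe_star_mul_self _
    have hD : diagonal (((↑) : ℝ → ℂ) ∘ Real.sqrt ∘ (hQ.1 x).1.eigenvalues) *
        diagonal (((↑) : ℝ → ℂ) ∘ Real.sqrt ∘ (hQ.1 x).1.eigenvalues) =
        diagonal (RCLike.ofReal ∘ (hQ.1 x).1.eigenvalues) := by
      rw [diagonal_mul_diagonal]
      congr 1
      ext i
      simp only [Function.comp_apply, ← Complex.ofReal_mul,
        Real.mul_self_sqrt ((hQ.1 x).eigenvalues_nonneg i)]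
      rfl
    conv_rhs => rw [(hQ.1 x).1.spectral_theorem, Unitary.conjStarAlgAut_apply]
    simp only [hSdef]
    rw [← hD]
    simp only [mul_assoc]
    rw [← mul_assoc (star _) (_ : Matrix (Fin b) (Fin b) ℂ), hU, one_mul]
  -- P y kills ψ x for y ≠ x
  have hker : ∀ x y, y ≠ x → (P y) *ᵥ ψ x = 0 := by
    intro x y hyx
    have hsum : ∑ z, star (ψ x) ⬝ᵥ (P z) *ᵥ ψ x = 1 := by
      have h1 : (∑ z, P z) *ᵥ ψ x = ∑ z, (P z) *ᵥ ψ x := by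
        ext i
        simp [Matrix.mulVec, dotProduct, Matrix.sum_apply, Finset.sum_mul]
        exact Finset.sum_comm .. 
      have h2 : star (ψ x) ⬝ᵥ (∑ z, P z) *ᵥ ψ x = 1 := by
        rw [hP.2, Matrix.one_mulVec, hunit]
      rw [h1] at h2
      rw [← h2]
      simp [dotProduct, Finset.sum_apply, Finset.mul_sum]
      exact Finset.sum_comm ..
    have hx1 : star (ψ x) ⬝ᵥ (P x) *ᵥ ψ x = 1 := by rw [heig, hunit]
    have h0 : ∑ z ∈ Finset.univ.erase x, star (ψ x) ⬝ᵥ (P z) *ᵥ ψ x = 0 := by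
      have h3 := Finset.sum_erase_add Finset.univ
        (fun z => star (ψ x) ⬝ᵥ (P z) *ᵥ ψ x) (Finset.mem_univ x)
      simp only [hsum] at h3
      simp only [hx1] at h3
      linear_combination h3
    have hzero : star (ψ x) ⬝ᵥ (P y) *ᵥ ψ x = 0 :=
      (Finset.sum_eq_zero_iff_of_nonneg (fun z _ => (hP.1 z).dotProduct_mulVec_nonneg _)).mp h0 y
        (Finset.mem_erase.mpr ⟨hyx, Finset.mem_univ y⟩)
    exact ((hP.1 y).dotProduct_mulVec_zero_iff _).mp hzero
  -- orthonormality
  have horth : ∀ x y, star (ψ x) ⬝ᵥ ψ y = if x = y then 1 else 0 := by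
    intro x y
    by_cases hxy : x = y
    · subst hxy; simp [hunit x]
    · rw [if_neg hxy, ← heig y, Matrix.dotProduct_mulVec]
      have : star (ψ x) ᵥ* P y = 0 := by
        rw [← (hP.1 y).1, ← Matrix.star_mulVec, hker x y fun h => hxy h.symm]
        simp
      rw [this, zero_dotProduct]
  have key : ∀ x y z, star (ψ y) ⬝ᵥ (P x) *ᵥ ψ z =
      (if y = x then (1:ℂ) else 0) * (if z = x then 1 else 0) := by
    intro x y z
    by_cases hzx : z = x
    · subst hzx
      rw [heig, horth, if_pos rfl, mul_one]
    · rw [hker z x fun h => hzx h.symm]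
      simp [hzx]
  -- main computation
  have main : ∀ x, Vᴴ * (P x ⊗ₖ (1 : Matrix (Fin b) (Fin b) ℂ)) * V = Q x := by
    intro x
    have expandM : Vᴴ * (P x ⊗ₖ (1 : Matrix (Fin b) (Fin b) ℂ)) * V =
        ∑ y, ∑ z, (star (ψ y) ⬝ᵥ (P x) *ᵥ ψ z) • ((S y)ᴴ * S z) := by
      set A : X → Matrix (Fin a × Fin b) (Fin b) ℂ :=
        fun y => Matrix.of fun p k => ψ y p.1 * S y p.2 k with hA
      have hVsum : V = ∑ y, A y := by
        ext p k
        simp [hV, hA, Matrix.sum_apply, hSdef]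
      rw [hVsum, Matrix.conjTranspose_sum, Matrix.sum_mul, Matrix.sum_mul]
      refine Finset.sum_congr rfl fun y _ => ?_
      rw [Matrix.mul_sum]
      refine Finset.sum_congr rfl fun z _ => ?_
      ext k l
      simp only [Matrix.mul_apply, Matrix.conjTranspose_apply, Matrix.kroneckerMap_apply,
        hA, Matrix.of_apply, Matrix.one_apply, Fintype.sum_prod_type, star_mul', mul_ite,
        ite_mul, mul_zero, zero_mul, mul_one, Finset.sum_ite_eq, Finset.sum_ite_eq',
        Finset.mem_univ, if_true, Matrix.smul_apply, dotProduct, Matrix.mulVec,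
        Pi.star_apply, smul_eq_mul, Finset.sum_mul, Finset.mul_sum]
      conv_lhs => rw [Finset.sum_comm]
      refine Finset.sum_congr rfl fun j _ => ?_
      conv_lhs => rw [Finset.sum_comm]
      refine Finset.sum_congr rfl fun i _ => ?_
      refine Finset.sum_congr rfl fun i' _ => ?_
      ring
    rw [expandM]
    have hcollapse : ∀ y ∈ Finset.univ,
        ∑ z, (star (ψ y) ⬝ᵥ (P x) *ᵥ ψ z) • ((S y)ᴴ * S z)
          = if y = x then (S x)ᴴ * S x else 0 := by
      intro y _
      by_cases hyx : y = x
      · subst hyx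
        rw [if_pos rfl, Finset.sum_eq_single y]
        · simp [key]
        · intro z _ hz; simp [key, hz]
        · simp
      · rw [if_neg hyx]
        apply Finset.sum_eq_zero
        intro z _
        simp [key, hyx]
    rw [Finset.sum_congr rfl hcollapse, Finset.sum_ite_eq' Finset.univ x,
      if_pos (Finset.mem_univ x), hSherm, hSS]
  refine ⟨main, ?_⟩
  refine ⟨{ toFun := fun M => Vᴴ * (M ⊗ₖ (1 : Matrix (Fin b) (Fin b) ℂ)) * V,
            map_add' := by
              intro M N
              simp only [Matrix.kroneckerMap_add_left (· * ·) add_mul, Matrix.mul_add,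
                Matrix.add_mul]
            map_smul' := by
              intro c M
              simp only [Matrix.kroneckerMap_smul_left (· * ·) c
                (fun p q => smul_mul_assoc c p q), Matrix.mul_smul, Matrix.smul_mul]
              rfl }, ?_, ?_, ?_⟩
  · refine ⟨b, fun j => Matrix.of (fun k i => star (V (i, j) k)), ?_⟩
    intro M
    ext k l
    simp only [LinearMap.coe_mk, AddHom.coe_mk, Matrix.mul_apply, Matrix.conjTranspose_apply,
      Matrix.sum_apply, Matrix.kroneckerMap_apply, Matrix.of_apply, Matrix.one_apply,
      Fintype.sum_prod_type, star_star, mul_ite, ite_mul, mul_zero, zero_mul, mul_one,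
      Finset.sum_ite_eq, Finset.sum_ite_eq', Finset.mem_univ, if_true,
      Finset.sum_mul, Finset.mul_sum]
    exact Finset.sum_comm ..
  · show Vᴴ * ((1 : Matrix (Fin a) (Fin a) ℂ) ⊗ₖ (1 : Matrix (Fin b) (Fin b) ℂ)) * V = 1
    have hk : ((∑ x, P x) ⊗ₖ (1 : Matrix (Fin b) (Fin b) ℂ)) =
        ∑ x, P x ⊗ₖ (1 : Matrix (Fin b) (Fin b) ℂ) := by
      ext p q
      simp [Matrix.kroneckerMap_apply, Matrix.sum_apply, Finset.sum_mul]
    rw [← hP.2, hk, Matrix.mul_sum, Matrix.sum_mul]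
    simp only [← Matrix.mul_assoc] at *
    calc ∑ x, Vᴴ * (P x ⊗ₖ (1 : Matrix (Fin b) (Fin b) ℂ)) * V = ∑ x, Q x := by
          exact Finset.sum_congr rfl fun x _ => main x
      _ = 1 := hQ.2
  · intro x
    exact main x
end

section
/- Let Φ : B(H_A) → B(H_B) be a positive unit-preserving linear map between finite-dimensional operator algebras, and let P be a positive semidefinite contraction on H_A (0 ≤ P ≤ 1). If Φ(P) has 1 as an eigenvalue, then P has 1 as an eigenvalue. -/
open Matrix Finset
open scoped ComplexOrder

def IsPosMap {a b : ℕ} (Φ : Matrix (Fin a) (Fin a) ℂ →ₗ[ℂ] Matrix (Fin b) (Fin b) ℂ) : Prop :=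
  ∀ A : Matrix (Fin a) (Fin a) ℂ, A.PosSemidef → (Φ A).PosSemidef

/-- A positive definite matrix dominates a positive multiple of the identity. -/
lemma posdef_sub_smul_one {n : ℕ} {Q : Matrix (Fin n) (Fin n) ℂ} (hn : 0 < n)
    (hQ : Q.PosDef) : ∃ ε : ℝ, 0 < ε ∧ (Q - (ε : ℂ) • 1).PosSemidef := by
  haveI : Nonempty (Fin n) := ⟨⟨0, hn⟩⟩
  set h := hQ.isHermitian with hh
  set ε : ℝ := Finset.univ.inf' Finset.univ_nonempty h.eigenvalues with hε
  refine ⟨ε, ?_, ?_⟩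
  · obtain ⟨i, _, hi⟩ := Finset.exists_mem_eq_inf' Finset.univ_nonempty h.eigenvalues
    rw [hε, hi]
    exact hQ.eigenvalues_pos i
  · have hspec := h.spectral_theorem
    rw [Unitary.conjStarAlgAut_apply] at hspec
    set U : Matrix (Fin n) (Fin n) ℂ := (h.eigenvectorUnitary : Matrix (Fin n) (Fin n) ℂ) with hU
    have hUU : U * star U = 1 := by
      have h2 := h.eigenvectorUnitary.2.2
      simp only [hU]
      exact h2
    have hD : Matrix.diagonal (fun i => ((h.eigenvalues i - ε : ℝ) : ℂ))
        = Matrix.diagonal (RCLike.ofReal ∘ h.eigenvalues) - (ε : ℂ) • 1 := by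
      ext i j
      by_cases hij : i = j <;>
        simp [Matrix.diagonal, hij, Matrix.one_apply, Complex.ofReal_sub, Matrix.sub_apply]
    have key : Q - (ε : ℂ) • 1
        = U * (Matrix.diagonal (fun i => ((h.eigenvalues i - ε : ℝ) : ℂ))) * star U := by
      rw [hD, Matrix.mul_sub, Matrix.sub_mul, ← hspec, Matrix.mul_smul, Matrix.mul_one,
        Matrix.smul_mul, hUU]
    rw [key, Matrix.star_eq_conjTranspose U]
    apply Matrix.PosSemidef.mul_mul_conjTranspose_same
    refine Matrix.posSemidef_diagonal_iff.mpr fun i => ?_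
    have : ε ≤ h.eigenvalues i := Finset.inf'_le _ (Finset.mem_univ i)
    have h0 : (0:ℝ) ≤ h.eigenvalues i - ε := by linarith
    exact_mod_cast h0

/-- A positive unit-preserving map cannot create the eigenvalue 1 for a positive
semidefinite contraction: if Φ(P) has 1 as an eigenvalue, so does P. -/
theorem pos_unital_map_eigenvalue_one {a b : ℕ}
    (Φ : Matrix (Fin a) (Fin a) ℂ →ₗ[ℂ] Matrix (Fin b) (Fin b) ℂ)
    (hpos : IsPosMap Φ) (hunital : Φ 1 = 1)
    (P : Matrix (Fin a) (Fin a) ℂ) (hP : P.PosSemidef)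
    (hPle : ((1 : Matrix (Fin a) (Fin a) ℂ) - P).PosSemidef)
    (φ : Fin b → ℂ) (hφ : star φ ⬝ᵥ φ = 1) (hfix : (Φ P).mulVec φ = φ) :
    ∃ ψ : Fin a → ℂ, star ψ ⬝ᵥ ψ = 1 ∧ P.mulVec ψ = ψ := by
  -- first dispose of the degenerate case a = 0
  rcases Nat.eq_zero_or_pos a with ha | ha
  · exfalso
    subst ha
    have hP0 : P = 0 := by ext i j; exact i.elim0
    rw [hP0, map_zero, Matrix.zero_mulVec] at hfix
    rw [← hfix] at hφ
    simp at hφ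
  set Q : Matrix (Fin a) (Fin a) ℂ := 1 - P with hQdef
  -- Q is not positive definite
  have hQnotPD : ¬ Q.PosDef := by
    intro hQPD
    obtain ⟨ε, hε, hPSD⟩ := posdef_sub_smul_one ha hQPD
    have h1 := (hpos _ hPSD).dotProduct_mulVec_nonneg φ
    have hΦQ : (Φ Q).mulVec φ = 0 := by
      rw [hQdef, map_sub, hunital, Matrix.sub_mulVec, Matrix.one_mulVec, hfix, sub_self]
    have hval : (Φ (Q - (ε : ℂ) • 1)).mulVec φ = -((ε : ℂ) • φ) := by
      rw [map_sub, LinearMap.map_smul, hunital, Matrix.sub_mulVec, hΦQ, Matrix.smul_mulVec,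
        Matrix.one_mulVec, zero_sub]
    rw [hval] at h1
    have : star φ ⬝ᵥ (-((ε : ℂ) • φ)) = -(ε : ℂ) := by
      rw [dotProduct_neg, dotProduct_smul, hφ, smul_eq_mul, mul_one]
    rw [this] at h1
    have : (0:ℝ) ≤ -ε := by
      have := Complex.le_def.mp h1
      simpa using this.1
    linarith
  -- hence there is a nonzero vector in the kernel of Q
  have hQH : Q.IsHermitian := hPle.1
  obtain ⟨x, hx0, hxval⟩ : ∃ x : Fin a → ℂ, x ≠ 0 ∧ star x ⬝ᵥ Q.mulVec x = 0 := by
    by_contra hc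
    push_neg at hc
    exact hQnotPD (.of_dotProduct_mulVec_pos hQH fun x hx => lt_of_le_of_ne (hPle.dotProduct_mulVec_nonneg x) (Ne.symm (hc x hx)))
  have hker : Q.mulVec x = 0 := (hPle.dotProduct_mulVec_zero_iff x).mp hxval
  have hPx : P.mulVec x = x := by
    have : x - P.mulVec x = 0 := by
      simpa [hQdef, Matrix.sub_mulVec, Matrix.one_mulVec] using hker
    have := sub_eq_zero.mp this
    exact this.symm
  -- normalize x
  have hcpos : 0 < star x ⬝ᵥ x := Matrix.dotProduct_star_self_pos_iff.mpr hx0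
  set c : ℂ := star x ⬝ᵥ x with hc
  have him : c.im = 0 := ((Complex.lt_def.mp hcpos).2).symm
  have hre : 0 < c.re := by
    have := (Complex.lt_def.mp hcpos).1
    simpa using this
  set r : ℝ := Real.sqrt c.re with hr
  have hrpos : 0 < r := Real.sqrt_pos.mpr hre
  refine ⟨((r⁻¹ : ℝ) : ℂ) • x, ?_, ?_⟩
  · have hstar : star (((r⁻¹ : ℝ) : ℂ) • x) = ((r⁻¹ : ℝ) : ℂ) • star x := by
      simp [star_smul]
    rw [hstar, smul_dotProduct, dotProduct_smul, ← hc, smul_eq_mul, smul_eq_mul]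
    have hceq : c = (c.re : ℂ) := Complex.ext rfl (by simp [him])
    rw [hceq]
    have : ((r⁻¹ : ℝ) : ℂ) * (((r⁻¹ : ℝ) : ℂ) * (c.re : ℂ)) = (((r⁻¹ * (r⁻¹ * c.re)) : ℝ) : ℂ) := by
      push_cast; ring
    rw [this]
    norm_cast
    have h2 : r * r = c.re := Real.mul_self_sqrt hre.le
    field_simp
    linarith
  · rw [Matrix.mulVec_smul, hPx]
end

section
/- If a POVM {P_x}_{x∈X} on H_A is preprocessing cleaner than every POVM {Q_x}_{x∈X} on any finite-dimensional H_B with the same outcome set X, then {P_x}_{x∈X} is sharp. -/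
open Matrix Finset
open scoped ComplexOrder

/-- A POVM that is preprocessing cleaner than every POVM with the same outcome
set (on any finite-dimensional space) is sharp. -/
theorem preprocessing_cleanest_implies_sharp {X : Type*} [Fintype X] {n : ℕ}
    (P : X → Matrix (Fin n) (Fin n) ℂ) (hP : IsPOVM P)
    (hclean : ∀ (m : ℕ) (Q : X → Matrix (Fin m) (Fin m) ℂ), IsPOVM Q →
      ∃ E : Matrix (Fin n) (Fin n) ℂ →ₗ[ℂ] Matrix (Fin m) (Fin m) ℂ,
        IsCPMap E ∧ E 1 = 1 ∧ ∀ x, E (P x) = Q x) :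
    IsSharp P := by
  classical
  intro x₀
  -- one-dimensional point POVM at x₀
  set Q : X → Matrix (Fin 1) (Fin 1) ℂ := fun x => if x = x₀ then 1 else 0 with hQdef
  have hQ : IsPOVM Q := by
    constructor
    · intro x
      by_cases h : x = x₀ <;> simp [hQdef, h, Matrix.PosSemidef.one, Matrix.PosSemidef.zero]
    · simp [hQdef]
  obtain ⟨E, ⟨k, K, hK⟩, hE1, hEx⟩ := hclean 1 Q hQ
  -- Kraus vectors
  set v : Fin k → Fin n → ℂ := fun i a => star (K i 0 a) with hvdef
  have key : ∀ M : Matrix (Fin n) (Fin n) ℂ,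
      (E M) 0 0 = ∑ i, star (v i) ⬝ᵥ M *ᵥ (v i) := by
    intro M
    rw [hK]
    rw [Matrix.sum_apply]
    refine Finset.sum_congr rfl fun i _ => ?_
    simp only [Matrix.mul_apply, Matrix.mulVec, dotProduct, Matrix.conjTranspose_apply,
      hvdef, star_star, Finset.sum_mul, Finset.mul_sum]
    rw [Finset.sum_comm]
    exact Finset.sum_congr rfl fun a _ => Finset.sum_congr rfl fun b _ => by
      simp only [Pi.star_apply, star_star]; ring
  have h1 : (∑ i, star (v i) ⬝ᵥ (1 : Matrix (Fin n) (Fin n) ℂ) *ᵥ (v i)) = 1 := by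
    rw [← key, hE1]; simp
  have h2 : (∑ i, star (v i) ⬝ᵥ (P x₀) *ᵥ (v i)) = 1 := by
    rw [← key, hEx x₀]; simp [hQdef]
  -- 1 - P x₀ is positive semidefinite
  have hR : (1 - P x₀).PosSemidef := by
    have hsum : 1 - P x₀ = ∑ x ∈ Finset.univ.erase x₀, P x := by
      rw [Finset.sum_erase_eq_sub (Finset.mem_univ x₀), hP.2]
    rw [hsum]
    refine Finset.sum_induction _ _ (fun a b ha hb => ha.add hb) Matrix.PosSemidef.zero
      fun x _ => hP.1 x
  -- each term vanishes
  have hterm0 : ∀ i, star (v i) ⬝ᵥ (1 - P x₀) *ᵥ (v i) = 0 := by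
    have hsum0 : (∑ i, star (v i) ⬝ᵥ (1 - P x₀) *ᵥ (v i)) = 0 := by
      simp only [Matrix.sub_mulVec, dotProduct_sub, Finset.sum_sub_distrib]
      rw [h1, h2, sub_self]
    intro i
    have := (Finset.sum_eq_zero_iff_of_nonneg
      (fun j _ => hR.dotProduct_mulVec_nonneg (v j))).mp hsum0 i (Finset.mem_univ i)
    exact this
  have hfix : ∀ i, (P x₀) *ᵥ (v i) = v i := by
    intro i
    have := (hR.dotProduct_mulVec_zero_iff (v i)).mp (hterm0 i)
    rw [Matrix.sub_mulVec, Matrix.one_mulVec, sub_eq_zero] at this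
    exact this.symm
  -- take a nonzero Kraus vector
  have hex : ∃ i, v i ≠ 0 := by
    by_contra h
    push_neg at h
    rw [Finset.sum_eq_zero (fun i _ => by rw [h i]; simp)] at h1
    exact one_ne_zero h1.symm
  obtain ⟨i, hvi⟩ := hex
  set t : ℂ := star (v i) ⬝ᵥ (v i) with htdef
  have ht0 : 0 ≤ t := by
    have := (Matrix.PosSemidef.one (n := Fin n) (R := ℂ)).dotProduct_mulVec_nonneg (v i)
    rwa [Matrix.one_mulVec] at this
  have htne : t ≠ 0 := fun h => hvi (dotProduct_star_self_eq_zero.mp h)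
  have htre : (t.re : ℂ) = t := (Complex.eq_re_of_ofReal_le ht0).symm
  have htrepos : 0 < t.re := by
    rcases lt_or_eq_of_le ((Complex.le_def.mp ht0).1) with h | h
    · simpa using h
    · exact absurd (by rw [← htre, ← h]; simp) htne
  set r : ℝ := Real.sqrt t.re with hrdef
  have hrpos : 0 < r := Real.sqrt_pos.mpr htrepos
  refine ⟨(r⁻¹ : ℂ) • v i, ?_, ?_⟩
  · rw [star_smul, smul_dotProduct, dotProduct_smul, ← htdef, smul_smul]
    have hconj : star ((r : ℂ)⁻¹) = (r : ℂ)⁻¹ := by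
      rw [RCLike.star_def, map_inv₀, Complex.conj_ofReal]
    have hrne : (r : ℂ) ≠ 0 := by exact_mod_cast hrpos.ne'
    have hrr : (r : ℂ) * r = (t.re : ℂ) := by
      norm_cast; exact Real.mul_self_sqrt htrepos.le
    rw [hconj, ← htre, smul_eq_mul, ← hrr]
    field_simp
  · rw [Matrix.mulVec_smul, hfix i]
end

section
/- A POVM {P_x}_{x∈X} on a finite-dimensional Hilbert space H is sharp if and only if its testing region equals the entire probability simplex on X, i.e., for every probability distribution p on X there exists a density matrix ρ with Tr(P_x ρ) = p(x) for all x. -/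
open Matrix Finset
open scoped ComplexOrder

lemma aux_trace_zero {n : ℕ} {M : Matrix (Fin n) (Fin n) ℂ} (hM : M.PosSemidef)
    (h : M.trace = 0) : M = 0 := by
  obtain ⟨B, rfl⟩ : ∃ B : Matrix (Fin n) (Fin n) ℂ, _ = Bᴴ * B := by open scoped MatrixOrder in exact CStarAlgebra.nonneg_iff_eq_star_mul_self.mp hM.nonneg
  suffices hB : B = 0 by simp [hB]
  have h1 : ∀ i : Fin n, (Bᴴ * B) i i = star (fun j => B j i) ⬝ᵥ (fun j => B j i) := fun i => by
    simp [Matrix.mul_apply, dotProduct, Matrix.conjTranspose_apply]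
  have h3 := (Finset.sum_eq_zero_iff_of_nonneg
    (fun i _ => show (0:ℂ) ≤ (Bᴴ * B).diag i from by
      show (0:ℂ) ≤ (Bᴴ * B) i i
      rw [h1 i]; exact dotProduct_star_self_nonneg _)).mp h
  ext j i
  have := dotProduct_star_self_eq_zero.mp ((h1 i).symm.trans (h3 i (Finset.mem_univ i)))
  exact congrFun this j

lemma aux_mul_eq_zero {n : ℕ} {A B : Matrix (Fin n) (Fin n) ℂ} (hA : A.PosSemidef)
    (hB : B.PosSemidef) (h : (A * B).trace = 0) : A * B = 0 := by
  obtain ⟨C, rfl⟩ : ∃ C : Matrix (Fin n) (Fin n) ℂ, _ = Cᴴ * C := by open scoped MatrixOrder in exact CStarAlgebra.nonneg_iff_eq_star_mul_self.mp hA.nonneg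
  obtain ⟨D, rfl⟩ : ∃ D : Matrix (Fin n) (Fin n) ℂ, _ = Dᴴ * D := by open scoped MatrixOrder in exact CStarAlgebra.nonneg_iff_eq_star_mul_self.mp hB.nonneg
  have h2 : ((C * Dᴴ)ᴴ * (C * Dᴴ)).trace = 0 := by
    rw [conjTranspose_mul, conjTranspose_conjTranspose]
    rw [show D * Cᴴ * (C * Dᴴ) = D * (Cᴴ * (C * Dᴴ)) from by
      simp only [Matrix.mul_assoc]]
    rw [Matrix.trace_mul_comm]
    simp only [← Matrix.mul_assoc] at h ⊢
    exact h
  have key : C * Dᴴ = 0 :=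
    conjTranspose_mul_self_eq_zero.mp (aux_trace_zero (posSemidef_conjTranspose_mul_self _) h2)
  rw [Matrix.mul_assoc, ← Matrix.mul_assoc C, key, Matrix.zero_mul, Matrix.mul_zero]

lemma aux_trace_mul_vecMulVec {n : ℕ} (A : Matrix (Fin n) (Fin n) ℂ) (w : Fin n → ℂ) :
    (A * vecMulVec w (star w)).trace = star w ⬝ᵥ A *ᵥ w := by
  simp only [Matrix.trace, Matrix.diag, Matrix.mul_apply, vecMulVec_apply, dotProduct,
    Matrix.mulVec, Pi.star_apply]
  apply Finset.sum_congr rfl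
  intro j _
  rw [Finset.mul_sum]
  apply Finset.sum_congr rfl
  intro i _
  ring

lemma aux_vecMulVec_psd {n : ℕ} (w : Fin n → ℂ) : (vecMulVec w (star w)).PosSemidef := by
  rw [vecMulVec_eq Unit, ← conjTranspose_replicateCol]
  exact posSemidef_self_mul_conjTranspose _

/-- A POVM is sharp iff its testing region is the whole probability simplex. -/
theorem sharp_iff_testing_region_full {X : Type*} [Fintype X] {n : ℕ}
    (P : X → Matrix (Fin n) (Fin n) ℂ) (hP : IsPOVM P) :
    IsSharp P ↔
      ∀ p : X → ℝ, (∀ x, 0 ≤ p x) → ∑ x, p x = 1 →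
        ∃ ρ : Matrix (Fin n) (Fin n) ℂ, ρ.PosSemidef ∧ ρ.trace = 1 ∧
          ∀ x, (P x * ρ).trace = (p x : ℂ) := by
  classical
  obtain ⟨hPSD, hsum⟩ := hP
  constructor
  · intro hSharp p hp0 hp1
    choose ψ hψ hfix using hSharp
    -- orthogonality of the measurement values
    have hkey : ∀ x y : X, star (ψ x) ⬝ᵥ (P y) *ᵥ (ψ x) = if y = x then 1 else 0 := by
      intro x y
      let g : Matrix (Fin n) (Fin n) ℂ →+ ℂ :=
        { toFun := fun M => star (ψ x) ⬝ᵥ M *ᵥ ψ x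
          map_zero' := by simp
          map_add' := fun M N => by simp [Matrix.add_mulVec, dotProduct_add] }
      have hsumf : ∑ z, star (ψ x) ⬝ᵥ (P z) *ᵥ (ψ x) = 1 := by
        calc ∑ z, star (ψ x) ⬝ᵥ (P z) *ᵥ (ψ x) = g (∑ z, P z) := (map_sum g P univ).symm
          _ = 1 := by
              rw [hsum]
              show star (ψ x) ⬝ᵥ (1 : Matrix (Fin n) (Fin n) ℂ) *ᵥ ψ x = 1
              rw [Matrix.one_mulVec, hψ x]
      have hfx : star (ψ x) ⬝ᵥ (P x) *ᵥ (ψ x) = 1 := by rw [hfix x, hψ x]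
      rcases eq_or_ne y x with rfl | hne
      · simp [hfx]
      · rw [if_neg hne]
        have herase : ∑ z ∈ univ.erase x, star (ψ x) ⬝ᵥ (P z) *ᵥ (ψ x) = 0 := by
          have := Finset.add_sum_erase univ (fun z => star (ψ x) ⬝ᵥ (P z) *ᵥ (ψ x)) (mem_univ x)
          beta_reduce at this
          rw [hsumf, hfx] at this
          linear_combination this
        exact (Finset.sum_eq_zero_iff_of_nonneg
          (fun z _ => (hPSD z).dotProduct_mulVec_nonneg (ψ x))).mp herase y (by simp [hne])
    set φ : X → Fin n → ℂ := fun x => (Real.sqrt (p x) : ℂ) • ψ x with hφ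
    have hstarφ : ∀ x, star (φ x) = (Real.sqrt (p x) : ℂ) • star (ψ x) := by
      intro x; rw [hφ]; simp [star_smul, Complex.conj_ofReal]
    refine ⟨∑ x, vecMulVec (φ x) (star (φ x)), ?_, ?_, ?_⟩
    · exact Finset.sum_induction _ _ (fun a b ha hb => ha.add hb) Matrix.PosSemidef.zero
        (fun x _ => aux_vecMulVec_psd _)
    · rw [Matrix.trace_sum]
      have : ∀ x : X, (vecMulVec (φ x) (star (φ x))).trace = (p x : ℂ) := by
        intro x
        have : (vecMulVec (φ x) (star (φ x))).trace = star (φ x) ⬝ᵥ φ x := by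
          simp [Matrix.trace, Matrix.diag, vecMulVec_apply, dotProduct, mul_comm]
        rw [this, hstarφ, hφ]
        simp only [smul_dotProduct, dotProduct_smul, hψ x, smul_eq_mul, mul_one]
        rw [← Complex.ofReal_mul, Real.mul_self_sqrt (hp0 x)]
      rw [Finset.sum_congr rfl fun x _ => this x, ← Complex.ofReal_sum, hp1, Complex.ofReal_one]
    · intro x
      rw [Finset.mul_sum, Matrix.trace_sum]
      have : ∀ y : X, (P x * vecMulVec (φ y) (star (φ y))).trace
          = (p y : ℂ) * (if x = y then 1 else 0) := by
        intro y
        rw [aux_trace_mul_vecMulVec, hstarφ, hφ]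
        simp only [smul_dotProduct, Matrix.mulVec_smul, dotProduct_smul, hkey y x, smul_eq_mul]
        rw [← mul_assoc, ← Complex.ofReal_mul, Real.mul_self_sqrt (hp0 y)]
      rw [Finset.sum_congr rfl fun y _ => this y]
      simp
  · intro h x
    set p : X → ℝ := fun y => if y = x then 1 else 0 with hp
    obtain ⟨ρ, hρ, htr, hval⟩ := h p (fun y => by by_cases hy : y = x <;> simp [hp, hy])
      (by simp [hp])
    have hPx : (P x * ρ).trace = 1 := by
      have := hval x; simpa [hp] using this
    -- 1 - P x is PSD
    have hone : (1 : Matrix (Fin n) (Fin n) ℂ) - P x = ∑ y ∈ univ.erase x, P y := by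
      rw [← hsum, ← Finset.add_sum_erase _ _ (mem_univ x)]
      abel
    have hpsd1 : ((1 : Matrix (Fin n) (Fin n) ℂ) - P x).PosSemidef := by
      rw [hone]
      exact Finset.sum_induction _ _ (fun a b ha hb => ha.add hb) Matrix.PosSemidef.zero
        (fun y _ => hPSD y)
    have hzero : ((1 : Matrix (Fin n) (Fin n) ℂ) - P x) * ρ = 0 := by
      apply aux_mul_eq_zero hpsd1 hρ
      rw [Matrix.sub_mul, Matrix.one_mul, Matrix.trace_sub, htr, hPx, sub_self]
    have hfixmat : P x * ρ = ρ := by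
      rw [Matrix.sub_mul, Matrix.one_mul, sub_eq_zero] at hzero
      exact hzero.symm
    -- pick a nonzero column of ρ
    have hρne : ρ ≠ 0 := fun h0 => by simp [h0] at htr
    have : ∃ i j, ρ i j ≠ 0 := by
      by_contra hc
      push_neg at hc
      exact hρne (Matrix.ext fun i j => hc i j)
    obtain ⟨i, j, hij⟩ := this
    set w : Fin n → ℂ := fun k => ρ k j with hw
    have hwne : w ≠ 0 := fun h0 => hij (by simpa [hw] using congrFun h0 i)
    have hPw : (P x) *ᵥ w = w := by
      funext k
      show (fun l => P x k l) ⬝ᵥ w = w k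
      have : (fun l => P x k l) ⬝ᵥ w = (P x * ρ) k j := by
        simp [Matrix.mul_apply, dotProduct, hw]
      rw [this, hfixmat]
    set c : ℂ := star w ⬝ᵥ w with hc
    have hc0 : 0 ≤ c := dotProduct_star_self_nonneg w
    have hcne : c ≠ 0 := fun h0 => hwne (dotProduct_star_self_eq_zero.mp h0)
    have him : c.im = 0 := (Complex.nonneg_iff.mp hc0).2.symm
    have hcre : c = (c.re : ℂ) := by
      rw [Complex.ext_iff]
      simp [him]
    have hrepos : 0 < c.re := by
      rcases lt_or_eq_of_le ((Complex.nonneg_iff.mp hc0).1) with h' | h'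
      · exact h'
      · exact absurd (by rw [hcre, ← h']; simp) hcne
    set r : ℝ := Real.sqrt c.re with hr
    have hrpos : 0 < r := Real.sqrt_pos.mpr hrepos
    refine ⟨(r : ℂ)⁻¹ • w, ?_, ?_⟩
    · rw [star_smul, smul_dotProduct, dotProduct_smul, ← hc, hcre]
      simp only [star_inv₀, Complex.star_def, Complex.conj_ofReal, smul_eq_mul]
      rw [← Complex.ofReal_inv, ← Complex.ofReal_mul, ← Complex.ofReal_mul]
      norm_cast
      rw [hr]
      rw [show (√c.re)⁻¹ * ((√c.re)⁻¹ * c.re) = c.re / (√c.re * √c.re) from by ring]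
      rw [Real.mul_self_sqrt hrepos.le, div_self hrepos.ne']
    · rw [Matrix.mulVec_smul, hPw]
end

section
/- If P can be transformed into Q by a fuzzifying operation (P ⪰_sharp Q), then for every reference POVM Z with the same outcome set, κ_u*(P‖Z) ≥ κ_u*(Q‖Z); i.e., the tuning degree with respect to every reference is a sharpness monotone. -/
open Matrix Finset
open scoped ComplexOrder

/-- `Sharper P Q` : there is a fuzzifying operation (CP unital preprocessing mixed
with a trivial POVM) transforming the POVM `P` into the POVM `Q`. -/
def Sharper {X : Type*} [Fintype X] {a b : ℕ}
    (P : X → Matrix (Fin a) (Fin a) ℂ) (Q : X → Matrix (Fin b) (Fin b) ℂ) : Prop :=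
  ∃ (E : Matrix (Fin a) (Fin a) ℂ →ₗ[ℂ] Matrix (Fin b) (Fin b) ℂ) (μ : ℝ) (p : X → ℝ),
    IsCPMap E ∧ E 1 = 1 ∧ 0 ≤ μ ∧ μ ≤ 1 ∧ (∀ x, 0 ≤ p x) ∧ ∑ x, p x = 1 ∧
    ∀ x, Q x = (μ : ℂ) • E (P x) + ((1 - μ : ℝ) : ℂ) • ((p x : ℂ) • 1)
noncomputable def tuningSet {X : Type*} [Fintype X] {a r : ℕ}
    (P : X → Matrix (Fin a) (Fin a) ℂ) (Z : X → Matrix (Fin r) (Fin r) ℂ) : Set ℝ :=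
  {v | ∃ Q : X → Matrix (Fin r) (Fin r) ℂ, Sharper P Q ∧
        v = (1 / (r : ℝ)) * ∑ x, (Q x * Z x).trace.re}

/-- The tuning degree κ_u*(P‖Z): the supremum of the uniform correlation with the
reference Z achievable from P via fuzzifying operations. -/
noncomputable def tuningDegree {X : Type*} [Fintype X] {a r : ℕ}
    (P : X → Matrix (Fin a) (Fin a) ℂ) (Z : X → Matrix (Fin r) (Fin r) ℂ) : ℝ :=
  sSup (tuningSet P Z)

lemma psd_trace_re_nonneg {n : ℕ} {M : Matrix (Fin n) (Fin n) ℂ} (hM : M.PosSemidef) :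
    0 ≤ M.trace.re := by
  have h : ∀ i, 0 ≤ (M i i).re := by
    intro i
    have := hM.re_dotProduct_nonneg (Pi.single i 1)
    simpa [dotProduct, mulVec, Pi.single_apply] using this
  rw [Matrix.trace, Complex.re_sum]
  exact Finset.sum_nonneg fun i _ => h i

lemma trace_mul_re_nonneg {n : ℕ} {A B : Matrix (Fin n) (Fin n) ℂ}
    (hA : A.PosSemidef) (hB : B.PosSemidef) : 0 ≤ ((A * B).trace).re := by
  obtain ⟨C, rfl⟩ : ∃ C : Matrix (Fin n) (Fin n) ℂ, A = Cᴴ * C :=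
    by open scoped MatrixOrder in exact CStarAlgebra.nonneg_iff_eq_star_mul_self.mp hA.nonneg
  have h : (Cᴴ * C * B).trace = (C * B * Cᴴ).trace :=
    (Matrix.trace_mul_cycle C B Cᴴ).symm
  rw [h]
  exact psd_trace_re_nonneg (hB.mul_mul_conjTranspose_same C)

lemma smul_psd {n : ℕ} {c : ℝ} (hc : 0 ≤ c) {M : Matrix (Fin n) (Fin n) ℂ}
    (hM : M.PosSemidef) : ((c : ℂ) • M).PosSemidef := by
  refine Matrix.posSemidef_iff_dotProduct_mulVec.mpr ⟨?_, ?_⟩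
  · have := hM.1
    simp [Matrix.IsHermitian, Matrix.conjTranspose_smul, hM.1.eq, Complex.star_def,
      Complex.conj_ofReal]
  · intro x
    have h : star x ⬝ᵥ ((c : ℂ) • M) *ᵥ x = (c : ℂ) * (star x ⬝ᵥ M *ᵥ x) := by
      simp [Matrix.smul_mulVec, dotProduct_smul, smul_eq_mul]
    rw [h]
    exact mul_nonneg (by exact_mod_cast Complex.zero_le_real.mpr hc) (hM.dotProduct_mulVec_nonneg x)

lemma sum_psd {n : ℕ} {ι : Type*} (s : Finset ι) (f : ι → Matrix (Fin n) (Fin n) ℂ)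
    (h : ∀ i ∈ s, (f i).PosSemidef) : (∑ i ∈ s, f i).PosSemidef := by
  classical
  induction s using Finset.induction_on with
  | empty => simpa using Matrix.PosSemidef.zero
  | insert _ _ hx ih =>
    rw [Finset.sum_insert hx]
    exact (h _ (Finset.mem_insert_self _ _)).add
      (ih fun i hi => h i (Finset.mem_insert_of_mem hi))

lemma cp_psd {a b : ℕ} {E : Matrix (Fin a) (Fin a) ℂ →ₗ[ℂ] Matrix (Fin b) (Fin b) ℂ}
    (hE : IsCPMap E) {M : Matrix (Fin a) (Fin a) ℂ} (hM : M.PosSemidef) :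
    (E M).PosSemidef := by
  obtain ⟨k, K, hK⟩ := hE
  rw [hK]
  exact sum_psd _ _ fun i _ => hM.mul_mul_conjTranspose_same (K i)

lemma cp_comp {a b c : ℕ} {E₁ : Matrix (Fin a) (Fin a) ℂ →ₗ[ℂ] Matrix (Fin b) (Fin b) ℂ}
    {E₂ : Matrix (Fin b) (Fin b) ℂ →ₗ[ℂ] Matrix (Fin c) (Fin c) ℂ}
    (h1 : IsCPMap E₁) (h2 : IsCPMap E₂) : IsCPMap (E₂ ∘ₗ E₁) := by
  obtain ⟨k₁, K₁, hK₁⟩ := h1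
  obtain ⟨k₂, K₂, hK₂⟩ := h2
  refine ⟨k₂ * k₁, fun i => K₂ (finProdFinEquiv.symm i).1 * K₁ (finProdFinEquiv.symm i).2,
    fun M => ?_⟩
  have := Equiv.sum_comp finProdFinEquiv.symm
    (fun p : Fin k₂ × Fin k₁ =>
      (K₂ p.1 * K₁ p.2) * M * (K₂ p.1 * K₁ p.2)ᴴ)
  simp only [LinearMap.comp_apply, hK₁, map_sum, hK₂]
  rw [this, Fintype.sum_prod_type]
  refine Finset.sum_congr rfl fun j _ => ?_
  rw [Matrix.mul_sum, Matrix.sum_mul]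
  refine Finset.sum_congr rfl fun i _ => ?_
  simp [Matrix.conjTranspose_mul, Matrix.mul_assoc]

lemma sharper_povm {X : Type*} [Fintype X] {a b : ℕ}
    {P : X → Matrix (Fin a) (Fin a) ℂ} {Q : X → Matrix (Fin b) (Fin b) ℂ}
    (hP : IsPOVM P) (h : Sharper P Q) : IsPOVM Q := by
  obtain ⟨E, μ, p, hE, hE1, hμ0, hμ1, hp0, hp1, hQf⟩ := h
  constructor
  · intro x
    rw [hQf x]
    exact (smul_psd hμ0 (cp_psd hE (hP.1 x))).add
      (smul_psd (by linarith) (smul_psd (hp0 x) Matrix.PosSemidef.one))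
  · have hone : ∑ x, ((p x : ℂ) • (1 : Matrix (Fin b) (Fin b) ℂ)) = 1 := by
      rw [← Finset.sum_smul]
      have h1 : (∑ x, (p x : ℂ)) = 1 := by norm_cast
      rw [h1, one_smul]
    calc ∑ x, Q x = ∑ x, ((μ : ℂ) • E (P x) + ((1 - μ : ℝ) : ℂ) • ((p x : ℂ) • 1)) := by
          exact Finset.sum_congr rfl fun x _ => hQf x
      _ = (μ : ℂ) • E (∑ x, P x) + ((1 - μ : ℝ) : ℂ) • ∑ x, ((p x : ℂ) • (1 : Matrix (Fin b) (Fin b) ℂ)) := by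
          rw [Finset.sum_add_distrib, ← Finset.smul_sum, ← Finset.smul_sum, map_sum]
      _ = 1 := by
          rw [hP.2, hE1, hone, ← add_smul]
          norm_num

lemma sharper_trans {X : Type*} [Fintype X] {a b c : ℕ}
    {P : X → Matrix (Fin a) (Fin a) ℂ} {Q : X → Matrix (Fin b) (Fin b) ℂ}
    {R : X → Matrix (Fin c) (Fin c) ℂ}
    (h1 : Sharper P Q) (h2 : Sharper Q R) : Sharper P R := by
  obtain ⟨E₁, μ₁, p₁, hE₁, hE₁1, hμ₁0, hμ₁1, hp₁0, hp₁1, hf₁⟩ := h1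
  obtain ⟨E₂, μ₂, p₂, hE₂, hE₂1, hμ₂0, hμ₂1, hp₂0, hp₂1, hf₂⟩ := h2
  have hμ0 : 0 ≤ μ₂ * μ₁ := mul_nonneg hμ₂0 hμ₁0
  have hμ1 : μ₂ * μ₁ ≤ 1 := mul_le_one₀ hμ₂1 hμ₁0 hμ₁1
  have key : ∀ (x : X) (q : ℝ),
      (1 - μ₂ * μ₁) * q = μ₂ * (1 - μ₁) * p₁ x + (1 - μ₂) * p₂ x →
      R x = ((μ₂ * μ₁ : ℝ) : ℂ) • (E₂ ∘ₗ E₁) (P x)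
        + ((1 - μ₂ * μ₁ : ℝ) : ℂ) • ((q : ℂ) • 1) := by
    intro x q hq
    have hqC := congrArg (Complex.ofReal) hq
    push_cast at hqC
    rw [hf₂ x, hf₁ x]
    simp only [map_add, _root_.map_smul, LinearMap.comp_apply, hE₂1, smul_add, smul_smul]
    push_cast
    match_scalars <;>
      first
        | ring1
        | linear_combination hqC
        | linear_combination -hqC
  by_cases hone : μ₂ * μ₁ = 1
  · refine ⟨E₂ ∘ₗ E₁, μ₂ * μ₁, p₂, cp_comp hE₁ hE₂, by simp [hE₁1, hE₂1], hμ0, hμ1,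
      hp₂0, hp₂1, fun x => key x (p₂ x) ?_⟩
    have h₁ : μ₁ = 1 := by nlinarith
    have h₂ : μ₂ = 1 := by nlinarith
    rw [h₁, h₂]; ring
  · have hlt : μ₂ * μ₁ < 1 := lt_of_le_of_ne hμ1 hone
    have hpos : 0 < 1 - μ₂ * μ₁ := by linarith
    refine ⟨E₂ ∘ₗ E₁, μ₂ * μ₁,
      fun x => (μ₂ * (1 - μ₁) * p₁ x + (1 - μ₂) * p₂ x) / (1 - μ₂ * μ₁),
      cp_comp hE₁ hE₂, by simp [hE₁1, hE₂1], hμ0, hμ1, ?_, ?_, fun x => key x _ ?_⟩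
    · intro x
      apply div_nonneg _ hpos.le
      exact add_nonneg (mul_nonneg (mul_nonneg hμ₂0 (by linarith)) (hp₁0 x))
        (mul_nonneg (by linarith) (hp₂0 x))
    · rw [← Finset.sum_div, Finset.sum_add_distrib, ← Finset.mul_sum, ← Finset.mul_sum,
        hp₁1, hp₂1]
      field_simp
      ring
    · field_simp

lemma povm_corr_nonneg {X : Type*} [Fintype X] {r : ℕ}
    {Q Z : X → Matrix (Fin r) (Fin r) ℂ} (hQ : IsPOVM Q) (hZ : IsPOVM Z) :
    0 ≤ ∑ x, ((Q x * Z x).trace).re :=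
  Finset.sum_nonneg fun x _ => trace_mul_re_nonneg (hQ.1 x) (hZ.1 x)

lemma povm_corr_le {X : Type*} [Fintype X] {r : ℕ}
    {Q Z : X → Matrix (Fin r) (Fin r) ℂ} (hQ : IsPOVM Q) (hZ : IsPOVM Z) :
    ∑ x, ((Q x * Z x).trace).re ≤ (r : ℝ) := by
  classical
  have hle : ∀ x : X, ((Q x * Z x).trace).re ≤ ((Z x).trace).re := by
    intro x
    have hsub : (1 - Q x).PosSemidef := by
      have h : (1 : Matrix (Fin r) (Fin r) ℂ) - Q x = ∑ y ∈ Finset.univ.erase x, Q y := by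
        rw [← hQ.2, ← Finset.add_sum_erase _ _ (Finset.mem_univ x)]
        exact add_sub_cancel_left _ _
      rw [h]
      exact sum_psd _ _ fun y _ => hQ.1 y
    have h0 : 0 ≤ (((1 - Q x) * Z x).trace).re := trace_mul_re_nonneg hsub (hZ.1 x)
    rw [Matrix.sub_mul, Matrix.one_mul, Matrix.trace_sub, Complex.sub_re] at h0
    linarith
  calc ∑ x, ((Q x * Z x).trace).re ≤ ∑ x, ((Z x).trace).re :=
        Finset.sum_le_sum fun x _ => hle x
    _ = (r : ℝ) := by
        rw [← Complex.re_sum, ← Matrix.trace_sum, hZ.2, Matrix.trace_one]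
        simp

/-- The tuning degree with respect to every reference POVM is a sharpness
monotone: if P can be fuzzified into Q, then κ_u*(P‖Z) ≥ κ_u*(Q‖Z) for all Z. -/
theorem tuning_degree_monotone {X : Type*} [Fintype X] {a b : ℕ}
    (P : X → Matrix (Fin a) (Fin a) ℂ) (Q : X → Matrix (Fin b) (Fin b) ℂ)
    (hP : IsPOVM P) (hQ : IsPOVM Q) (hPQ : Sharper P Q) :
    ∀ (r : ℕ) (Z : X → Matrix (Fin r) (Fin r) ℂ), IsPOVM Z →
      tuningDegree Q Z ≤ tuningDegree P Z := by
  intro r Z hZ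
  have hbdd : BddAbove (tuningSet P Z) := by
    refine ⟨1, fun v hv => ?_⟩
    obtain ⟨Q', hQ', rfl⟩ := hv
    have hQ'povm : IsPOVM Q' := sharper_povm hP hQ'
    have h1 := povm_corr_le hQ'povm hZ
    have h0 := povm_corr_nonneg hQ'povm hZ
    rcases Nat.eq_zero_or_pos r with hr | hr
    · simp [hr]
    · have hrpos : (0 : ℝ) < r := by exact_mod_cast hr
      calc (1 / (r : ℝ)) * ∑ x, ((Q' x * Z x).trace).re
          ≤ (1 / (r : ℝ)) * r :=
            mul_le_mul_of_nonneg_left h1 (le_of_lt (one_div_pos.mpr hrpos))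
        _ = 1 := by field_simp
  have hsub : tuningSet Q Z ⊆ tuningSet P Z := by
    rintro v ⟨Q', hQ', rfl⟩
    exact ⟨Q', sharper_trans hPQ hQ', rfl⟩
  rcases (tuningSet Q Z).eq_empty_or_nonempty with he | hne
  · rw [tuningDegree, he, Real.sSup_empty]
    apply Real.sSup_nonneg
    rintro v ⟨Q', hQ', rfl⟩
    have hQ'povm := sharper_povm hP hQ'
    exact mul_nonneg (by positivity) (povm_corr_nonneg hQ'povm hZ)
  · exact csSup_le_csSup hbdd hne hsub
end
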